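/- Let b ≥ 5 be a natural number and B = 2^b (so B ≥ 32 and B is divisible by 4). Let P, j be natural numbers with j ≤ P, let H : ℕ → ℕ satisfy H(i) ≤ 3 for all i, let δ ∈ ℝ with |δ| ≤ B^(−(j+1)), and set x = δ + Σ_{i=0}^{P} H(i)/B^i. Define the natural number Y = Σ_{i=0}^{j} H(i)·B^(j−i). Then |B^j · x − Y| ≤ 1/4 and Y mod 4 = H(j). -/

import Mathlib

/-- Decoding step in the proof of the main lemma: the real number `x` encoding a
column of the discrete tableau can be written as `(Y + η)·B^(−j)` with `|η| ≤ 1/4`,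
and the digit `H(j)` is recovered as `Y mod 4`. -/
theorem tableau_column_decoding
    (b : ℕ) (hb : 5 ≤ b) (B : ℕ) (hB : B = 2 ^ b)
    (P j : ℕ) (hj : j ≤ P)
    (H : ℕ → ℕ) (hH : ∀ i, H i ≤ 3)
    (δ : ℝ) (hδ : |δ| ≤ (B : ℝ) ^ (-((j : ℤ) + 1)))
    (x : ℝ) (hx : x = δ + ∑ i ∈ Finset.range (P + 1), (H i : ℝ) / (B : ℝ) ^ i)
    (Y : ℕ) (hY : Y = ∑ i ∈ Finset.range (j + 1), H i * B ^ (j - i)) :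
    |(B : ℝ) ^ j * x - (Y : ℝ)| ≤ 1 / 4 ∧ Y % 4 = H j := by
  have hB32 : (32 : ℕ) ≤ B := by
    rw [hB]
    calc (32 : ℕ) = 2 ^ 5 := by norm_num
    _ ≤ 2 ^ b := Nat.pow_le_pow_right (by norm_num) hb
  have hB0 : (0 : ℝ) < (B : ℝ) := by exact_mod_cast lt_of_lt_of_le (by norm_num) hB32
  have hB32R : (32 : ℝ) ≤ (B : ℝ) := by exact_mod_cast hB32
  -- Part 2 : Y % 4 = H j
  have hmod : Y % 4 = H j := by
    have hdvd : 4 ∣ ∑ i ∈ Finset.range j, H i * B ^ (j - i) := by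
      apply Finset.dvd_sum
      intro i hi
      have hij : i < j := Finset.mem_range.mp hi
      have h4B : 4 ∣ B := by
        rw [hB]
        have : (2 : ℕ) ^ 2 ∣ 2 ^ b := Nat.pow_dvd_pow 2 (by omega)
        simpa using this
      exact Dvd.dvd.mul_left (h4B.trans (dvd_pow_self B (Nat.sub_ne_zero_of_lt hij))) _
    rw [hY, Finset.sum_range_succ, Nat.sub_self, pow_zero, mul_one]
    have := hH j
    omega
  refine ⟨?_, hmod⟩
  -- Part 1
  have hBne : (B : ℝ) ≠ 0 := ne_of_gt hB0
  set T : ℝ := ∑ i ∈ Finset.Ico (j + 1) (P + 1), (H i : ℝ) * ((B : ℝ) ^ j / (B : ℝ) ^ i)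
    with hT
  have key : (B : ℝ) ^ j * x - (Y : ℝ) = (B : ℝ) ^ j * δ + T := by
    have hsplit : ∑ i ∈ Finset.range (P + 1), (H i : ℝ) / (B : ℝ) ^ i
        = ∑ i ∈ Finset.range (j + 1), (H i : ℝ) / (B : ℝ) ^ i
          + ∑ i ∈ Finset.Ico (j + 1) (P + 1), (H i : ℝ) / (B : ℝ) ^ i := by
      rw [Finset.range_eq_Ico, Finset.range_eq_Ico]
      exact (Finset.sum_Ico_consecutive (f := fun i => (H i : ℝ) / (B : ℝ) ^ i) (m := 0) (n := j + 1) (k := P + 1) (Nat.zero_le _) (by omega)).symm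
    have hYcast : (Y : ℝ) = (B : ℝ) ^ j * ∑ i ∈ Finset.range (j + 1), (H i : ℝ) / (B : ℝ) ^ i := by
      rw [hY, Finset.mul_sum]
      push_cast
      apply Finset.sum_congr rfl
      intro i hi
      have hij : i ≤ j := by
        have := Finset.mem_range.mp hi; omega
      rw [pow_sub₀ _ hBne hij]
      ring
    have hT2 : T = (B : ℝ) ^ j * ∑ i ∈ Finset.Ico (j + 1) (P + 1), (H i : ℝ) / (B : ℝ) ^ i := by
      rw [hT, Finset.mul_sum]
      apply Finset.sum_congr rfl
      intro i _
      ring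
    rw [hx, hsplit, hYcast, hT2]
    ring
  rw [key]
  -- bound |B^j δ|
  have hbd1 : |(B : ℝ) ^ j * δ| ≤ 1 / 32 := by
    have h1 : |(B : ℝ) ^ j * δ| ≤ (B : ℝ) ^ j * (B : ℝ) ^ (-((j : ℤ) + 1)) := by
      rw [abs_mul, abs_pow, abs_of_nonneg hB0.le]
      exact mul_le_mul_of_nonneg_left hδ (by positivity)
    have h2 : (B : ℝ) ^ j * (B : ℝ) ^ (-((j : ℤ) + 1)) = (B : ℝ)⁻¹ := by
      rw [← zpow_natCast (B : ℝ) j, ← zpow_add₀ hBne]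
      norm_num
    rw [h2] at h1
    refine h1.trans ?_
    rw [one_div]
    exact inv_anti₀ (by norm_num) hB32R
  -- bound the tail T
  have hr0 : (0 : ℝ) < (B : ℝ)⁻¹ := by positivity
  have hr1 : (B : ℝ)⁻¹ ≤ 1 / 32 := by
    rw [one_div]; exact inv_anti₀ (by norm_num) hB32R
  have hT0 : 0 ≤ T := by
    apply Finset.sum_nonneg
    intro i _
    positivity
  have hTle : T ≤ 3 / 31 := by
    have hterm : ∀ i ∈ Finset.Ico (j + 1) (P + 1),
        (H i : ℝ) * ((B : ℝ) ^ j / (B : ℝ) ^ i) ≤ 3 * ((B : ℝ)⁻¹) ^ (i - j) := by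
      intro i hi
      have hij : j ≤ i := by
        have := (Finset.mem_Ico.mp hi).1; omega
      have hpow : (B : ℝ) ^ j / (B : ℝ) ^ i = ((B : ℝ)⁻¹) ^ (i - j) := by
        rw [inv_pow, pow_sub₀ _ hBne hij, ← div_eq_mul_inv, inv_div]
      rw [hpow]
      apply mul_le_mul_of_nonneg_right _ (by positivity)
      exact_mod_cast hH i
    calc T ≤ ∑ i ∈ Finset.Ico (j + 1) (P + 1), 3 * ((B : ℝ)⁻¹) ^ (i - j) :=
          Finset.sum_le_sum hterm
      _ = 3 * (B : ℝ)⁻¹ * ∑ k ∈ Finset.range (P - j), ((B : ℝ)⁻¹) ^ k := by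
          rw [Finset.sum_Ico_eq_sum_range, Finset.mul_sum]
          have : P + 1 - (j + 1) = P - j := by omega
          rw [this]
          apply Finset.sum_congr rfl
          intro k _
          have : j + 1 + k - j = k + 1 := by omega
          rw [this, pow_succ]
          ring
      _ ≤ 3 * (B : ℝ)⁻¹ * (1 / (1 - (B : ℝ)⁻¹)) := by
          apply mul_le_mul_of_nonneg_left _ (by positivity)
          have hrlt1 : (B : ℝ)⁻¹ < 1 := lt_of_le_of_lt hr1 (by norm_num)
          have hmul := geom_sum_mul ((B : ℝ)⁻¹) (P - j)
          have hpn : (0 : ℝ) ≤ ((B : ℝ)⁻¹) ^ (P - j) := by positivity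
          rw [le_div_iff₀ (by linarith)]
          nlinarith
      _ ≤ 3 / 31 := by
          have h1 : (1 : ℝ) - (B : ℝ)⁻¹ ≥ 31 / 32 := by linarith
          have h2 : (1 : ℝ) / (1 - (B : ℝ)⁻¹) ≤ 32 / 31 := by
            rw [div_le_div_iff₀ (by linarith) (by norm_num)]
            linarith
          calc 3 * (B : ℝ)⁻¹ * (1 / (1 - (B : ℝ)⁻¹)) ≤ 3 * (1 / 32) * (32 / 31) := by
                apply mul_le_mul (by linarith) h2 (by positivity) (by norm_num)
            _ = 3 / 31 := by norm_num
  calc |(B : ℝ) ^ j * δ + T| ≤ |(B : ℝ) ^ j * δ| + |T| := abs_add_le _ _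
    _ ≤ 1 / 32 + 3 / 31 := by
        rw [abs_of_nonneg hT0]; exact add_le_add hbd1 hTle
    _ ≤ 1 / 4 := by norm_num
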